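/- Let Q ≥ 1 and let A and B be Q×Q complex matrices that are both column conjugate symmetric, i.e. [A]_{q,q'} = conj([A]_{Q−1−q,q'}) and [B]_{q,q'} = conj([B]_{Q−1−q,q'}) for all 0 ≤ q, q' ≤ Q−1. Then every entry of the matrix A^H · B is a real number. This holds no matter whether Q is even or odd. -/
import Mathlib


open Matrix

/-- If `A` and `B` are both column conjugate symmetric (`[A]_{q,q'} = conj [A]_{Q-1-q,q'}`),
then every entry of `Aᴴ B` is real. -/
theorem stmt11 (Q : ℕ) (hQ : 1 ≤ Q) (A B : Matrix (Fin Q) (Fin Q) ℂ)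
    (hA : ∀ q q' : Fin Q, A q q' = starRingEnd ℂ (A q.rev q'))
    (hB : ∀ q q' : Fin Q, B q q' = starRingEnd ℂ (B q.rev q')) :
    ∀ q q' : Fin Q, ((Aᴴ * B) q q').im = 0 := by
  intro q q'
  rw [← Complex.conj_eq_iff_im]
  simp only [Matrix.mul_apply, Matrix.conjTranspose_apply, map_sum]
  refine Fintype.sum_equiv ⟨Fin.rev, Fin.rev, Fin.rev_rev, Fin.rev_rev⟩ _ _ ?_
  intro k
  simp only [Equiv.coe_fn_mk, Complex.star_def, _root_.map_mul, Complex.conj_conj]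
  rw [hA k q, hB k q']
  simp [_root_.map_mul]
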